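/- arXiv:2210.02599 — 2 statements merged into one kernel-verified Lean document; each statement's English description precedes it below -/
import Mathlib

section
/- Let $k \geq 2$, $\phi_1, \ldots, \phi_{k-1} \in \mathbb{R}$ with $\Phi := \sum_{i=1}^{k-1} |\phi_i| < 1$, and let $F_0, F_1$ be the $(k-1)\times(k-1)$ companion-type matrices defined by: first row of $F_\delta$ equal to $(\phi_1 \delta, \phi_2, \ldots, \phi_{k-1})$, second row $(\delta, 0, \ldots, 0)$, and rows $3 \leq i \leq k-1$ having a $1$ in column $i-1$ and zeros elsewhere. Then for any $\delta_1, \ldots, \delta_{k-1} \in \{0,1\}$ and any $x \in \mathbb{R}^{k-1}$, $\|F_{\delta_{k-1}} \cdots F_{\delta_1} x\|_\infty \leq \Phi \|x\|_\infty$. -/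
/-- The companion-type matrix `F_δ` of the regime-switching representation of
the first differences of a dynamic Tobit process of order `k`. -/
def Fmat (k : ℕ) (φ : ℕ → ℝ) (δ : ℝ) : Matrix (Fin (k - 1)) (Fin (k - 1)) ℝ :=
  fun i j =>
    if i.val = 0 then (if j.val = 0 then φ 1 * δ else φ (j.val + 1))
    else if i.val = 1 then (if j.val = 0 then δ else 0)
    else if j.val + 1 = i.val then 1 else 0

/-- Any product of `k - 1` of the matrices `F_0, F_1` contracts the supremum
norm by the factor `Φ = ∑ |φ_i| < 1`. -/
theorem stmt_5 (k : ℕ) (hk : 2 ≤ k) (φ : ℕ → ℝ)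
    (hΦ : ∑ i ∈ Finset.Icc 1 (k - 1), |φ i| < 1)
    (δ : ℕ → ℝ) (hδ : ∀ s, δ s = 0 ∨ δ s = 1)
    (x : Fin (k - 1) → ℝ) (g : ℕ → Fin (k - 1) → ℝ)
    (hg0 : g 0 = x)
    (hg : ∀ s, g (s + 1) = (Fmat k φ (δ (s + 1))).mulVec (g s)) :
    ‖g (k - 1)‖ ≤ (∑ i ∈ Finset.Icc 1 (k - 1), |φ i|) * ‖x‖ := by
  have hn : 1 ≤ k - 1 := by omega
  set Φ := ∑ i ∈ Finset.Icc 1 (k - 1), |φ i| with hΦdef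
  have hΦ0 : 0 ≤ Φ := Finset.sum_nonneg fun i _ => abs_nonneg _
  have hxnn : 0 ≤ ‖x‖ := norm_nonneg x
  have hcoord : ∀ i : Fin (k-1), |x i| ≤ ‖x‖ := fun i => by
    simpa using norm_le_pi_norm x i
  have hδ1 : ∀ s, |δ s| ≤ 1 := by intro s; rcases hδ s with h | h <;> simp [h]
  have hsum : ∑ j : Fin (k-1), |φ (j.val + 1)| = Φ := by
    rw [hΦdef, Fin.sum_univ_eq_sum_range (fun j => |φ (j + 1)|), ← Finset.Ico_add_one_right_eq_Icc,
      Finset.sum_Ico_eq_sum_range]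
    simp [add_comm]
  have key : ∀ s : ℕ, (∀ i : Fin (k-1), |g s i| ≤ ‖x‖) ∧
      (∀ i : Fin (k-1), i.val < s → |g s i| ≤ Φ * ‖x‖) := by
    intro s
    induction s with
    | zero => exact ⟨by simpa [hg0] using hcoord, fun i hi => absurd hi (by omega)⟩
    | succ s ih =>
      obtain ⟨ih1, ih2⟩ := ih
      have hstep : ∀ i : Fin (k-1), |g (s+1) i| ≤ if i.val = 0 then Φ * ‖x‖
          else if i.val = 1 then |g s ⟨0, by omega⟩|
          else |g s ⟨i.val - 1, by omega⟩| := by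
        intro i
        rw [hg s]
        by_cases h0 : i.val = 0
        · simp only [h0, if_true]
          calc |(Fmat k φ (δ (s+1))).mulVec (g s) i|
              = |∑ j : Fin (k-1), Fmat k φ (δ (s+1)) i j * g s j| := by
                simp [Matrix.mulVec, dotProduct]
            _ ≤ ∑ j : Fin (k-1), |Fmat k φ (δ (s+1)) i j * g s j| :=
                Finset.abs_sum_le_sum_abs _ _
            _ ≤ ∑ j : Fin (k-1), |φ (j.val + 1)| * ‖x‖ := by
                apply Finset.sum_le_sum
                intro j _
                rw [abs_mul]
                have hij : |Fmat k φ (δ (s+1)) i j| ≤ |φ (j.val+1)| := by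
                  simp only [Fmat, h0, if_true]
                  by_cases hj : j.val = 0
                  · rw [hj]
                    rw [if_pos rfl, abs_mul]
                    calc |φ 1| * |δ (s+1)| ≤ |φ 1| * 1 :=
                          mul_le_mul_of_nonneg_left (hδ1 _) (abs_nonneg _)
                      _ = |φ (0+1)| := by norm_num
                  · simp [hj]
                exact mul_le_mul hij (ih1 j) (abs_nonneg _) (abs_nonneg _)
            _ = Φ * ‖x‖ := by rw [← Finset.sum_mul, hsum]
        · by_cases h1 : i.val = 1
          · simp only [h0, h1, if_false, if_true]
            have : (Fmat k φ (δ (s+1))).mulVec (g s) i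
                = δ (s+1) * g s ⟨0, by omega⟩ := by
              show ∑ j : Fin (k-1), Fmat k φ (δ (s+1)) i j * g s j = _
              rw [Finset.sum_eq_single (⟨0, by omega⟩ : Fin (k-1))]
              · simp [Fmat, h0, h1]
              · intro j _ hne
                have hjv : j.val ≠ 0 := fun h => hne (Fin.ext h)
                simp [Fmat, h0, h1, hjv]
              · simp
            rw [this, abs_mul]
            calc |δ (s+1)| * |g s ⟨0, by omega⟩| ≤ 1 * |g s ⟨0, by omega⟩| :=
                  mul_le_mul_of_nonneg_right (hδ1 _) (abs_nonneg _)
              _ = _ := one_mul _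
          · simp only [h0, h1, if_false]
            have h2 : 2 ≤ i.val := by omega
            have : (Fmat k φ (δ (s+1))).mulVec (g s) i
                = g s ⟨i.val - 1, by omega⟩ := by
              show ∑ j : Fin (k-1), Fmat k φ (δ (s+1)) i j * g s j = _
              rw [Finset.sum_eq_single (⟨i.val - 1, by omega⟩ : Fin (k-1))]
              · have : (i.val - 1) + 1 = i.val := by omega
                simp [Fmat, h0, h1, this]
              · intro j _ hne
                have hjv : j.val + 1 ≠ i.val := by
                  intro h
                  exact hne (Fin.ext (show j.val = i.val - 1 by omega))
                simp [Fmat, h0, h1, hjv]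
              · simp
            rw [this]
      have hΦx : Φ * ‖x‖ ≤ ‖x‖ := by
        calc Φ * ‖x‖ ≤ 1 * ‖x‖ := mul_le_mul_of_nonneg_right hΦ.le hxnn
          _ = ‖x‖ := one_mul _
      constructor
      · intro i
        refine le_trans (hstep i) ?_
        by_cases h0 : i.val = 0
        · simpa [h0] using hΦx
        · by_cases h1 : i.val = 1
          · simpa [h0, h1] using ih1 ⟨0, by omega⟩
          · simpa [h0, h1] using ih1 ⟨i.val - 1, by omega⟩
      · intro i hi
        refine le_trans (hstep i) ?_
        by_cases h0 : i.val = 0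
        · simp [h0]
        · by_cases h1 : i.val = 1
          · have hs : 1 ≤ s := by omega
            simpa [h0, h1] using ih2 ⟨0, by omega⟩ (by simp; omega)
          · have : i.val - 1 < s := by omega
            simpa [h0, h1] using ih2 ⟨i.val - 1, by omega⟩ this
  have := (key (k - 1)).2
  have hnonneg : 0 ≤ Φ * ‖x‖ := mul_nonneg hΦ0 hxnn
  refine (pi_norm_le_iff_of_nonneg hnonneg).2 fun i => ?_
  simpa using this i i.isLt
end

section
/- Let $k \geq 2$, $\phi_1, \ldots, \phi_{k-1} \in \mathbb{R}$ with $\Phi := \sum_{i=1}^{k-1} |\phi_i| < 1$, and $F_0, F_1$ the associated $(k-1) \times (k-1)$ companion-type matrices (first row of $F_\delta$: $(\phi_1\delta, \phi_2, \ldots, \phi_{k-1})$; second row: $(\delta, 0, \ldots, 0)$; rows $3, \ldots, k-1$: the shift, with $1$ in column $i-1$). Then the joint spectral radius $\lambda_{JSR}(\{F_0, F_1\}) := \limsup_{n \to \infty} \sup_{M \in \mathcal{A}^n} \lambda(M)^{1/n}$, where $\mathcal{A}^n$ is the set of all products of $n$ matrices taken from $\{F_0, F_1\}$ and $\lambda(M)$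 is the spectral radius of $M$, satisfies $\lambda_{JSR}(\{F_0, F_1\}) \leq \Phi^{1/(k-1)} < 1$. -/
open Filter

/-- The set of products of `n` matrices drawn from `{F_0, F_1}`. -/
def prodSet (k : ℕ) (φ : ℕ → ℝ) (n : ℕ) :
    Set (Matrix (Fin (k - 1)) (Fin (k - 1)) ℝ) :=
  {M | ∃ δ : Fin n → ℝ, (∀ i, δ i = 0 ∨ δ i = 1) ∧
    M = (List.ofFn (fun i => Fmat k φ (δ i))).prod}

lemma rowsum_mul {d : ℕ} (w : Fin d → ℝ) (hw : ∀ i, 0 < w i)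
    (A B : Matrix (Fin d) (Fin d) ℝ) (r s : ℝ) (hs : 0 ≤ s)
    (hA : ∀ i, ∑ j, |A i j| * w j ≤ r * w i)
    (hB : ∀ i, ∑ j, |B i j| * w j ≤ s * w i) (i : Fin d) :
    ∑ j, |(A * B) i j| * w j ≤ (r * s) * w i := by
  calc ∑ j, |(A * B) i j| * w j
      ≤ ∑ j, (∑ l, |A i l| * |B l j|) * w j := by
        refine Finset.sum_le_sum fun j _ => mul_le_mul_of_nonneg_right ?_ (hw j).le
        rw [Matrix.mul_apply]
        calc |∑ l, A i l * B l j| ≤ ∑ l, |A i l * B l j| := Finset.abs_sum_le_sum_abs _ _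
          _ = ∑ l, |A i l| * |B l j| := by simp [abs_mul]
    _ = ∑ l, |A i l| * (∑ j, |B l j| * w j) := by
        simp only [Finset.sum_mul, Finset.mul_sum, mul_assoc]
        rw [Finset.sum_comm]
    _ ≤ ∑ l, |A i l| * (s * w l) := by
        exact Finset.sum_le_sum fun l _ => mul_le_mul_of_nonneg_left (hB l) (abs_nonneg _)
    _ = s * ∑ l, |A i l| * w l := by
        rw [Finset.mul_sum]; exact Finset.sum_congr rfl fun l _ => by ring
    _ ≤ s * (r * w i) := mul_le_mul_of_nonneg_left (hA i) hs
    _ = (r * s) * w i := by ring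

lemma rowsum_list {d : ℕ} (w : Fin d → ℝ) (hw : ∀ i, 0 < w i) (r : ℝ) (hr : 0 ≤ r) :
    ∀ L : List (Matrix (Fin d) (Fin d) ℝ),
      (∀ A ∈ L, ∀ i, ∑ j, |A i j| * w j ≤ r * w i) →
      ∀ i, ∑ j, |L.prod i j| * w j ≤ r ^ L.length * w i
  | [] => by
      intro _ i
      simp only [List.prod_nil, List.length_nil, pow_zero, one_mul, Matrix.one_apply,
        apply_ite abs, abs_one, abs_zero, ite_mul, one_mul, zero_mul, Finset.sum_ite_eq,
        Finset.mem_univ, if_true, le_refl]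
  | A :: L => by
      intro h i
      have hA := h A List.mem_cons_self
      have hL := rowsum_list w hw r hr L (fun B hB => h B (List.mem_cons_of_mem _ hB))
      have := rowsum_mul w hw A L.prod r (r ^ L.length) (pow_nonneg hr _) hA hL i
      simpa [List.prod_cons, pow_succ, mul_comm] using this
lemma specRad_le {d : ℕ} (M : Matrix (Fin d) (Fin d) ℝ) (w : Fin d → ℝ) (hw : ∀ i, 0 < w i)
    (r : ℝ) (hr : 0 ≤ r)
    (hM : ∀ i, ∑ j, |M i j| * w j ≤ r * w i) :
    spectralRadius ℂ (M.map (algebraMap ℝ ℂ)) ≤ ENNReal.ofReal r := by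
  set A := M.map (algebraMap ℝ ℂ) with hA
  rw [spectralRadius]
  refine iSup₂_le fun μ hμ => ?_
  rw [show ((‖μ‖₊ : NNReal) : ENNReal) = ENNReal.ofReal ‖μ‖ from (ENNReal.ofReal_eq_coe_nnreal (norm_nonneg μ)).symm]
  refine ENNReal.ofReal_le_ofReal ?_
  rw [spectrum.mem_iff] at hμ
  have hdet : ((algebraMap ℂ (Matrix (Fin d) (Fin d) ℂ)) μ - A).det = 0 := by
    by_contra hne
    exact hμ ((Matrix.isUnit_iff_isUnit_det _).2 (Ne.isUnit hne))
  obtain ⟨v, hv0, hv⟩ := Matrix.exists_mulVec_eq_zero_iff.2 hdet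
  have hEig : A.mulVec v = μ • v := by
    have h1 : ((algebraMap ℂ (Matrix (Fin d) (Fin d) ℂ)) μ - A).mulVec v
        = μ • v - A.mulVec v := by
      rw [Matrix.sub_mulVec]
      congr 1
      rw [Matrix.algebraMap_eq_diagonal]
      funext j
      simp [Matrix.mulVec_diagonal, Pi.algebraMap_apply, Algebra.algebraMap_self_apply]
    rw [h1] at hv
    exact (sub_eq_zero.mp hv).symm
  -- pick argmax of ‖v i‖ / w i
  obtain ⟨i1, hi1⟩ : ∃ i, v i ≠ 0 := Function.ne_iff.mp hv0
  obtain ⟨i0, -, hmax⟩ := Finset.exists_max_image Finset.univ (fun i => ‖v i‖ / w i)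
    ⟨i1, Finset.mem_univ i1⟩
  set t := ‖v i0‖ / w i0 with ht
  have htpos : 0 < t := lt_of_lt_of_le (div_pos (norm_pos_iff.2 hi1) (hw i1))
    (hmax i1 (Finset.mem_univ i1))
  have hvb : ∀ j, ‖v j‖ ≤ t * w j := fun j =>
    (div_le_iff₀ (hw j)).1 (hmax j (Finset.mem_univ j))
  have hvi0 : ‖v i0‖ = t * w i0 := (div_mul_cancel₀ _ (hw i0).ne').symm
  have hrow : ‖μ‖ * ‖v i0‖ ≤ t * (r * w i0) := by
    have h2 : μ * v i0 = ∑ j, A i0 j * v j := by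
      have := congrFun hEig i0
      rw [Matrix.mulVec, dotProduct] at this
      simpa [Pi.smul_apply, smul_eq_mul] using this.symm
    calc ‖μ‖ * ‖v i0‖ = ‖μ * v i0‖ := (norm_mul _ _).symm
      _ = ‖∑ j, A i0 j * v j‖ := by rw [h2]
      _ ≤ ∑ j, ‖A i0 j * v j‖ := norm_sum_le _ _
      _ = ∑ j, |M i0 j| * ‖v j‖ := by
          refine Finset.sum_congr rfl fun j _ => ?_
          rw [norm_mul, hA, Matrix.map_apply]
          simp [Real.norm_eq_abs]
      _ ≤ ∑ j, |M i0 j| * (t * w j) :=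
          Finset.sum_le_sum fun j _ => mul_le_mul_of_nonneg_left (hvb j) (abs_nonneg _)
      _ = t * ∑ j, |M i0 j| * w j := by
          rw [Finset.mul_sum]; exact Finset.sum_congr rfl fun j _ => by ring
      _ ≤ t * (r * w i0) := mul_le_mul_of_nonneg_left (hM i0) htpos.le
  rw [hvi0] at hrow
  have hpos : 0 < t * w i0 := mul_pos htpos (hw i0)
  nlinarith [hrow, hpos]
lemma fmat_rowsum (k : ℕ) (hk : 2 ≤ k) (φ : ℕ → ℝ) (ρ : ℝ) (hρ0 : 0 < ρ) (hρ1 : ρ ≤ 1)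
    (hΦ : ∑ i ∈ Finset.Icc 1 (k - 1), |φ i| ≤ ρ ^ (k - 1)) (δ : ℝ) (hδ : δ = 0 ∨ δ = 1)
    (i : Fin (k - 1)) :
    ∑ j, |Fmat k φ δ i j| * ρ⁻¹ ^ (j : ℕ) ≤ ρ * ρ⁻¹ ^ (i : ℕ) := by
  have hd1 : 1 ≤ k - 1 := by omega
  have hδ1 : |δ| ≤ 1 := by rcases hδ with h | h <;> simp [h]
  have hρi : (1 : ℝ) ≤ ρ⁻¹ := (one_le_inv₀ hρ0).2 hρ1
  rcases Nat.lt_or_ge (i : ℕ) 1 with h0 | h1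
  · -- first row
    have hi0 : (i : ℕ) = 0 := by omega
    rw [hi0, pow_zero, mul_one]
    have hjlt : ∀ j : Fin (k - 1), (j : ℕ) ≤ (k - 1) - 1 := fun j => by omega
    calc ∑ j, |Fmat k φ δ i j| * ρ⁻¹ ^ (j : ℕ)
        ≤ ∑ j : Fin (k - 1), |φ ((j : ℕ) + 1)| * ρ⁻¹ ^ ((k - 1) - 1) := by
          refine Finset.sum_le_sum fun j _ => ?_
          have h1 : |Fmat k φ δ i j| ≤ |φ ((j : ℕ) + 1)| := by
            simp only [Fmat, hi0, if_true]
            by_cases hj : (j : ℕ) = 0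
            · simp only [hj, if_true, abs_mul]
              calc |φ 1| * |δ| ≤ |φ 1| * 1 :=
                    mul_le_mul_of_nonneg_left hδ1 (abs_nonneg _)
                _ = |φ (0 + 1)| := by norm_num
            · simp [hj]
          have h2 : ρ⁻¹ ^ (j : ℕ) ≤ ρ⁻¹ ^ ((k - 1) - 1) :=
            pow_le_pow_right₀ hρi (hjlt j)
          exact mul_le_mul h1 h2 (by positivity) (abs_nonneg _)
      _ = (∑ i ∈ Finset.Icc 1 (k - 1), |φ i|) * ρ⁻¹ ^ ((k - 1) - 1) := by
          rw [← Finset.sum_mul]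
          congr 1
          rw [← Finset.Ico_add_one_right_eq_Icc, Finset.sum_Ico_eq_sum_range,
            Fin.sum_univ_eq_sum_range (fun j => |φ (j + 1)|)]
          simp [add_comm]
      _ ≤ ρ ^ (k - 1) * ρ⁻¹ ^ ((k - 1) - 1) :=
          mul_le_mul_of_nonneg_right hΦ (by positivity)
      _ = ρ := by
          have hsplit : k - 1 = ((k - 1) - 1) + 1 := by omega
          have hpow : ρ ^ (k - 1) = ρ ^ ((k - 1) - 1) * ρ := by
            rw [← pow_succ, ← hsplit]
          rw [hpow, inv_pow, mul_right_comm, mul_inv_cancel₀ (pow_ne_zero _ hρ0.ne'), one_mul]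
  rcases eq_or_lt_of_le h1 with h1' | h2
  · -- second row
    have hi1 : (i : ℕ) = 1 := h1'.symm
    have hd0 : 0 < k - 1 := by omega
    rw [hi1, pow_one, mul_inv_cancel₀ hρ0.ne',
      Finset.sum_eq_single (⟨0, hd0⟩ : Fin (k - 1))]
    · simpa [Fmat, hi1] using hδ1
    · intro b _ hb
      have hbv : (b : ℕ) ≠ 0 := by
        intro h; exact hb (Fin.ext (by simp [h]))
      simp [Fmat, hi1, hbv]
    · intro h; exact absurd (Finset.mem_univ _) h
  · -- shift rows
    have hi2 : 2 ≤ (i : ℕ) := h2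
    have hlt : (i : ℕ) - 1 < k - 1 := by omega
    have hsplit : (i : ℕ) = ((i : ℕ) - 1) + 1 := by omega
    have key : ρ * ρ⁻¹ ^ (i : ℕ) = ρ⁻¹ ^ ((i : ℕ) - 1) := by
      conv_lhs => rw [hsplit]
      rw [pow_succ, ← mul_assoc, mul_comm ρ, mul_assoc, mul_inv_cancel₀ hρ0.ne', mul_one]
    rw [key, Finset.sum_eq_single (⟨(i : ℕ) - 1, hlt⟩ : Fin (k - 1))]
    · have hieq : ((i : ℕ) - 1) + 1 = (i : ℕ) := by omega
      simp only [Fmat]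
      rw [if_neg (by omega), if_neg (by omega), if_pos hieq, abs_one, one_mul]
    · intro b _ hb
      have hbv : (b : ℕ) + 1 ≠ (i : ℕ) := by
        intro h
        have hb' : (b : ℕ) = (i : ℕ) - 1 := by omega
        exact hb (Fin.ext (by simp [hb']))
      simp only [Fmat]
      rw [if_neg (by omega), if_neg (by omega), if_neg hbv, abs_zero, zero_mul]
    · intro h; exact absurd (Finset.mem_univ _) h

/-- If `Φ = ∑ |φ_i| < 1`, then the joint spectral radius of `{F_0, F_1}`
is at most `Φ^(1/(k-1)) < 1`. -/
theorem stmt_7 (k : ℕ) (hk : 2 ≤ k) (φ : ℕ → ℝ)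
    (hΦ : ∑ i ∈ Finset.Icc 1 (k - 1), |φ i| < 1) :
    Filter.limsup
        (fun n : ℕ =>
          ⨆ M ∈ prodSet k φ n,
            (spectralRadius ℂ (M.map (algebraMap ℝ ℂ))) ^ ((1 : ℝ) / n))
        Filter.atTop ≤
      ENNReal.ofReal
        ((∑ i ∈ Finset.Icc 1 (k - 1), |φ i|) ^ ((1 : ℝ) / ((k : ℝ) - 1)))
      ∧ (∑ i ∈ Finset.Icc 1 (k - 1), |φ i|) ^ ((1 : ℝ) / ((k : ℝ) - 1)) < 1 := by
  have hΦ0 : 0 ≤ ∑ i ∈ Finset.Icc 1 (k - 1), |φ i| :=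
    Finset.sum_nonneg fun i _ => abs_nonneg _
  have hkR : ((k : ℝ) - 1) = ((k - 1 : ℕ) : ℝ) := by
    have : (1 : ℕ) ≤ k := by omega
    push_cast [Nat.cast_sub this]
    ring
  have hkpos : (0 : ℝ) < (k : ℝ) - 1 := by
    rw [hkR]
    exact_mod_cast Nat.pos_of_ne_zero (by omega)
  -- the key bound for any admissible ρ
  have key : ∀ ρ : ℝ, 0 < ρ → ρ ≤ 1 →
      (∑ i ∈ Finset.Icc 1 (k - 1), |φ i|) ≤ ρ ^ (k - 1) →
      Filter.limsup
        (fun n : ℕ =>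
          ⨆ M ∈ prodSet k φ n,
            (spectralRadius ℂ (M.map (algebraMap ℝ ℂ))) ^ ((1 : ℝ) / n))
        Filter.atTop ≤ ENNReal.ofReal ρ := by
    intro ρ hρ0 hρ1 hΦρ
    refine Filter.limsup_le_of_le (by isBoundedDefault) ?_
    filter_upwards [Filter.eventually_ge_atTop 1] with n hn
    refine iSup₂_le fun M hM => ?_
    obtain ⟨δv, hδv, rfl⟩ := hM
    set w : Fin (k - 1) → ℝ := fun j => ρ⁻¹ ^ (j : ℕ) with hwdef
    have hw : ∀ j, 0 < w j := fun j => by positivity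
    have hprod := rowsum_list w hw ρ hρ0.le
      (List.ofFn fun i => Fmat k φ (δv i))
      (by
        intro A hA i
        obtain ⟨m, rfl⟩ := List.mem_ofFn.1 hA
        exact fmat_rowsum k hk φ ρ hρ0 hρ1 hΦρ (δv m) (hδv m) i)
    have hlen : (List.ofFn fun i => Fmat k φ (δv i)).length = n := by
      simp
    rw [hlen] at hprod
    have hsr := specRad_le _ w hw (ρ ^ n) (pow_nonneg hρ0.le n) hprod
    calc (spectralRadius ℂ (((List.ofFn fun i => Fmat k φ (δv i)).prod).map
            (algebraMap ℝ ℂ))) ^ ((1 : ℝ) / n)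
        ≤ (ENNReal.ofReal (ρ ^ n)) ^ ((1 : ℝ) / n) :=
          ENNReal.rpow_le_rpow hsr (by positivity)
      _ = ENNReal.ofReal ρ := by
          rw [ENNReal.ofReal_pow hρ0.le, ← ENNReal.rpow_natCast, ← ENNReal.rpow_mul,
            mul_one_div, div_self (Nat.cast_ne_zero.2 (by omega : n ≠ 0)),
            ENNReal.rpow_one]
  constructor
  · rcases eq_or_lt_of_le hΦ0 with h0 | hpos
    · -- Φ = 0
      have hlim : Filter.limsup
          (fun n : ℕ =>
            ⨆ M ∈ prodSet k φ n,
              (spectralRadius ℂ (M.map (algebraMap ℝ ℂ))) ^ ((1 : ℝ) / n))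
          Filter.atTop ≤ (0 : ENNReal) := by
        refine ENNReal.le_of_forall_pos_le_add fun ε hε _ => ?_
        have hρ0 : (0 : ℝ) < min (ε : ℝ) 1 := lt_min (by exact_mod_cast hε) one_pos
        have h := key (min (ε : ℝ) 1) hρ0 (min_le_right _ _)
          (by rw [← h0]; positivity)
        calc _ ≤ ENNReal.ofReal (min (ε : ℝ) 1) := h
          _ ≤ ENNReal.ofReal (ε : ℝ) := ENNReal.ofReal_le_ofReal (min_le_left _ _)
          _ = (ε : ENNReal) := ENNReal.ofReal_coe_nnreal
          _ ≤ 0 + (ε : ENNReal) := by simp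
      exact le_trans hlim zero_le
    · -- Φ > 0
      set Φ := ∑ i ∈ Finset.Icc 1 (k - 1), |φ i| with hΦdef
      set ρ := Φ ^ ((1 : ℝ) / ((k : ℝ) - 1)) with hρdef
      have hρ0 : 0 < ρ := Real.rpow_pos_of_pos hpos _
      have hρ1 : ρ ≤ 1 := Real.rpow_le_one hΦ0 hΦ.le (by positivity)
      have hρpow : ρ ^ (k - 1) = Φ := by
        rw [hρdef, ← Real.rpow_natCast (Φ ^ ((1 : ℝ) / ((k : ℝ) - 1))) (k - 1),
          ← Real.rpow_mul hΦ0, ← hkR, one_div, inv_mul_cancel₀ hkpos.ne',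
          Real.rpow_one]
      exact key ρ hρ0 hρ1 hρpow.ge
  · exact Real.rpow_lt_one hΦ0 hΦ (by positivity)
end
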